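/- The limit lim_{ρ→∞} (−5ρ⁵/(8√3))·(ζ(k) − 2√3 ω(k)/(βρ)) equals k_x³(k_x² + 5k_y²)/k¹⁰, where ζ(k) = arctan((k_y − √3 k_x)/(ρk²)) − arctan((k_y + √3 k_x)/(ρk²)) and ω(k) = −β k_x/(k² + ρ⁻²). -/

import Mathlib

open Filter Real Topology

set_option maxHeartbeats 1000000 in
lemma zono_poly_id (A B K x : ℝ) (hK3 : A^2 + B^2 + A*B = 3*K) :
    A*K*(K^2+B^2*x^2)*(K+x^2)^2 - B*K*(K^2+A^2*x^2)*(K+x^2)^2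
      - (A-B)*(K-x^2)*((K^2+A^2*x^2)*(K^2+B^2*x^2))
    = x^4 * ((-(A-B)) * (-K*(K-A*B)*(4*K+A*B) + (A*B*(K-A*B))*x^2)) := by
  obtain rfl : K = (A^2+B^2+A*B)/3 := by linarith
  ring

set_option maxHeartbeats 1000000 in
/-- lim_{ρ→∞} (−5ρ⁵/(8√3))(ζ(k) − 2√3 ω(k)/(βρ)) = k_x³(k_x²+5k_y²)/k¹⁰,
where ζ(k) = arctan((k_y−√3k_x)/(ρk²)) − arctan((k_y+√3k_x)/(ρk²)) and
ω(k) = −β k_x/(k² + ρ⁻²). -/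
theorem zonostrophy_small_scale_limit (β : ℝ) (hβ : 0 < β) (kx ky : ℝ)
    (hk : (kx, ky) ≠ (0, 0)) :
    Tendsto (fun ρ : ℝ =>
        (-5 * ρ ^ 5 / (8 * Real.sqrt 3)) *
          ((Real.arctan ((ky - Real.sqrt 3 * kx) / (ρ * (kx ^ 2 + ky ^ 2)))
              - Real.arctan ((ky + Real.sqrt 3 * kx) / (ρ * (kx ^ 2 + ky ^ 2))))
            - 2 * Real.sqrt 3 * (-β * kx / ((kx ^ 2 + ky ^ 2) + (ρ ^ 2)⁻¹)) / (β * ρ)))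
      atTop
      (nhds (kx ^ 3 * (kx ^ 2 + 5 * ky ^ 2) / (kx ^ 2 + ky ^ 2) ^ 5)) := by
  have hβ0 : β ≠ 0 := hβ.ne'
  have hKpre : 0 < kx^2 + ky^2 := by
    rcases eq_or_ne kx 0 with h|h
    · rcases eq_or_ne ky 0 with h'|h'
      · exact absurd (by simp [h, h']) hk
      · positivity
    · positivity
  set s : ℝ := Real.sqrt 3 with hs_def
  have hs2 : s^2 = 3 := Real.sq_sqrt (by norm_num)
  have hs0 : (0:ℝ) < s := Real.sqrt_pos.mpr (by norm_num)
  set K : ℝ := kx^2 + ky^2 with hKdef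
  have hK : 0 < K := hKpre
  set A : ℝ := ky - s*kx with hAdef
  set B : ℝ := ky + s*kx with hBdef
  have hK3 : A^2 + B^2 + A*B = 3*K := by
    rw [hAdef, hBdef, hKdef]; linear_combination kx^2 * hs2
  have hABv : A*B = ky^2 - 3*kx^2 := by
    rw [hAdef, hBdef]; linear_combination (-kx^2) * hs2
  have hKmAB : K - A*B = 4*kx^2 := by rw [hABv, hKdef]; ring
  have h4K : 4*K + A*B = kx^2 + 5*ky^2 := by rw [hABv, hKdef]; ring
  have hAmB : -(A-B) = 2*s*kx := by rw [hAdef, hBdef]; ring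
  clear_value s K A B
  have hK0 : K ≠ 0 := hK.ne'
  set C : ℝ := -(8*s)/5 * (kx^3*(kx^2+5*ky^2)/K^5) with hCdef
  set f : ℝ → ℝ := fun t => Real.arctan (A*t/K) - Real.arctan (B*t/K) + 2*s*kx*t/(K+t^2)
    with hfdef
  set f' : ℝ → ℝ := fun x =>
      (A*K)/(K^2+A^2*x^2) - (B*K)/(K^2+B^2*x^2) + (-(A-B))*(K - x^2)/(K+x^2)^2 with hf'def
  set Q : ℝ → ℝ := fun x =>
      ((-(A-B))*(-K*(K-A*B)*(4*K+A*B) + (A*B*(K-A*B))*x^2))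
        / (5*((K+x^2)^2*((K^2+A^2*x^2)*(K^2+B^2*x^2)))) with hQdef
  clear_value C f f' Q
  have hDp : ∀ x : ℝ, (0:ℝ) < K + x^2 := fun x => add_pos_of_pos_of_nonneg hK (sq_nonneg x)
  have hD2 : ∀ x : ℝ, (0:ℝ) < K^2 + A^2*x^2 :=
    fun x => add_pos_of_pos_of_nonneg (pow_pos hK 2) (by positivity)
  have hD3 : ∀ x : ℝ, (0:ℝ) < K^2 + B^2*x^2 :=
    fun x => add_pos_of_pos_of_nonneg (pow_pos hK 2) (by positivity)
  have hderiv : ∀ x : ℝ, HasDerivAt f (f' x) x := by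
    intro x
    have hKx2 : K + x^2 ≠ 0 := (hDp x).ne'
    have h1 : HasDerivAt (fun t : ℝ => Real.arctan (A*t/K)) ((1/(1+(A*x/K)^2)) * (A*1/K)) x :=
      (((hasDerivAt_id x).const_mul A).div_const K).arctan
    have h2 : HasDerivAt (fun t : ℝ => Real.arctan (B*t/K)) ((1/(1+(B*x/K)^2)) * (B*1/K)) x :=
      (((hasDerivAt_id x).const_mul B).div_const K).arctan
    have h3 : HasDerivAt (fun t : ℝ => 2*s*kx*t/(K+t^2))
        ((2*s*kx*1*(K+x^2) - 2*s*kx*x*(2*x^1)) / (K+x^2)^2) x :=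
      ((hasDerivAt_id x).const_mul (2*s*kx)).div ((hasDerivAt_pow 2 x).const_add K) hKx2
    have h4 := (h1.sub h2).add h3
    rw [hfdef, hf'def]
    refine h4.congr_deriv ?_
    rw [hAmB]
    have hd1 : (1:ℝ)+(A*x/K)^2 ≠ 0 := by positivity
    have hd2 : (1:ℝ)+(B*x/K)^2 ≠ 0 := by positivity
    have hd3 : K^2+A^2*x^2 ≠ 0 := (hD2 x).ne'
    have hd4 : K^2+B^2*x^2 ≠ 0 := (hD3 x).ne'
    field_simp
    ring
  have hg : ∀ x : ℝ, HasDerivAt (fun t : ℝ => t^5) (5*x^4) x := by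
    intro x
    have := hasDerivAt_pow 5 x
    norm_num at this
    exact this
  have hQ0 : Q 0 = C := by
    rw [hQdef]
    simp only
    rw [hAmB, hKmAB, h4K, hCdef]
    norm_num
    field_simp
    ring
  have hQcont : Tendsto Q (𝓝[>] (0:ℝ)) (𝓝 C) := by
    rw [← hQ0, hQdef]
    apply tendsto_nhdsWithin_of_tendsto_nhds
    apply (ContinuousAt.div (by fun_prop) (by fun_prop) ?_).tendsto
    have := hDp 0
    have := hD2 0
    have := hD3 0
    positivity
  have hdiv : Tendsto (fun x => f' x / (5*x^4)) (𝓝[>] (0:ℝ)) (𝓝 C) := by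
    apply hQcont.congr'
    filter_upwards [self_mem_nhdsWithin] with x hx
    have hx0 : x ≠ 0 := ne_of_gt hx
    have e1 : f' x = (A*K*(K^2+B^2*x^2)*(K+x^2)^2 - B*K*(K^2+A^2*x^2)*(K+x^2)^2
        - (A-B)*(K-x^2)*((K^2+A^2*x^2)*(K^2+B^2*x^2)))
        / ((K^2+A^2*x^2)*((K^2+B^2*x^2)*(K+x^2)^2)) := by
      rw [hf'def]
      simp only
      have hd3 : K^2+A^2*x^2 ≠ 0 := (hD2 x).ne'
      have hd4 : K^2+B^2*x^2 ≠ 0 := (hD3 x).ne'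
      have hd5 : K+x^2 ≠ 0 := (hDp x).ne'
      field_simp
      ring
    have e2 := zono_poly_id A B K x hK3
    rw [hQdef]
    simp only
    rw [e1, e2, div_div]
    rw [div_eq_div_iff (by
        exact (mul_pos (by norm_num : (0:ℝ) < 5) (mul_pos (pow_pos (hDp x) 2)
          (mul_pos (hD2 x) (hD3 x)))).ne')
      (by
        exact (mul_pos (mul_pos (hD2 x) (mul_pos (hD3 x) (pow_pos (hDp x) 2)))
          (by positivity : (0:ℝ) < 5*x^4)).ne')]
    ring
  have hfa : Tendsto f (𝓝[>] (0:ℝ)) (𝓝 0) := by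
    apply tendsto_nhdsWithin_of_tendsto_nhds
    have h0 : f 0 = 0 := by rw [hfdef]; simp
    have ht := (hderiv 0).continuousAt.tendsto
    rw [h0] at ht
    exact ht
  have hga : Tendsto (fun t : ℝ => t^5) (𝓝[>] (0:ℝ)) (𝓝 0) := by
    apply tendsto_nhdsWithin_of_tendsto_nhds
    simpa using (continuous_pow 5).tendsto (0:ℝ)
  have key : Tendsto (fun t => f t / t^5) (𝓝[>] (0:ℝ)) (𝓝 C) := by
    apply HasDerivAt.lhopital_zero_nhdsGT (f' := f') (g' := fun x => 5*x^4)
      (Eventually.of_forall hderiv) (Eventually.of_forall hg) ?_ hfa hga hdiv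
    filter_upwards [self_mem_nhdsWithin] with x hx
    have hx' : (0:ℝ) < x := hx
    positivity
  have keyF : Tendsto (fun t => (-5/(8*s)) * (f t / t^5)) (𝓝[>] (0:ℝ))
      (𝓝 ((-5/(8*s)) * C)) := key.const_mul _
  have hval : (-5/(8*s)) * C = kx^3*(kx^2+5*ky^2)/K^5 := by
    rw [hCdef]
    field_simp
  rw [hval] at keyF
  have hcomp := keyF.comp tendsto_inv_atTop_nhdsGT_zero
  apply hcomp.congr'
  filter_upwards [eventually_gt_atTop (0:ℝ)] with ρ hρ
  have hρ0 : ρ ≠ 0 := hρ.ne'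
  simp only [Function.comp, hfdef]
  have e1 : A*ρ⁻¹/K = A/(ρ*K) := by
    rw [div_eq_div_iff (by exact hK0) (by positivity)]
    field_simp
  have e2 : B*ρ⁻¹/K = B/(ρ*K) := by
    rw [div_eq_div_iff (by exact hK0) (by positivity)]
    field_simp
  rw [e1, e2]
  have hden1 : K + (ρ⁻¹)^2 ≠ 0 := by positivity
  have hden2 : K + (ρ^2)⁻¹ ≠ 0 := by positivity
  field_simp
  ring
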